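/- For all integers m ≥ 1 and n ≥ 1: det( binomial(i+j+m, i-j+m) )_{i,j=0}^{n-1} = ∏_{1 ≤ i ≤ j ≤ n-1} (2m+i+j)/(i+j). -/

import Mathlib

open scoped Nat
noncomputable def tQ (m i j k : ℕ) : ℚ :=
  if k ≤ j then (m.choose (j - k) : ℚ) * (i.choose k) * ((2*m+i+k).choose (m+k)) else 0

theorem tQ_cert (m i j k : ℕ) :
    (((j:ℚ)+1)*((m:ℚ)+j+1) - (k:ℚ)*((k:ℚ)+m)) * tQ m i (j+1) k
      + ((k:ℚ)+1)*((k:ℚ)+m+1) * tQ m i (j+1) (k+1)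
    = ((m:ℚ)+i+j+1) * ((m:ℚ)+(i:ℚ)-(j:ℚ)) * tQ m i j k := by
  unfold tQ
  rcases le_or_gt k j with hkj | hjk
  · rw [if_pos (by omega), if_pos (by omega), if_pos hkj]
    have hjk1 : j + 1 - k = (j - k) + 1 := by omega
    have hjk2 : j + 1 - (k + 1) = j - k := by omega
    rw [hjk1, hjk2]
    rcases le_or_gt (j - k) m with hm1 | hm1
    · rcases le_or_gt k i with hi1 | hi1
      · -- main case
        have e1 : (m.choose ((j-k)+1) : ℚ) * ((j:ℚ)-(k:ℚ)+1) = (m.choose (j-k) : ℚ) * ((m:ℚ)-(j:ℚ)+(k:ℚ)) := by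
          have := Nat.choose_succ_right_eq m (j - k)
          have hc : ((m.choose ((j-k)+1) * ((j-k) + 1) : ℕ) : ℚ) = ((m.choose (j-k) * (m - (j-k)) : ℕ) : ℚ) := by
            exact_mod_cast congrArg (Nat.cast (R := ℚ)) this
          push_cast [Nat.cast_sub hm1, Nat.cast_sub hkj] at hc
          push_cast [Nat.cast_sub hkj]
          linarith [hc]
        have e2 : (i.choose (k+1) : ℚ) * ((k:ℚ)+1) = (i.choose k : ℚ) * ((i:ℚ)-(k:ℚ)) := by
          have := Nat.choose_succ_right_eq i k
          have hc : ((i.choose (k+1) * (k + 1) : ℕ) : ℚ) = ((i.choose k * (i - k) : ℕ) : ℚ) := by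
            exact_mod_cast congrArg (Nat.cast (R := ℚ)) this
          push_cast [Nat.cast_sub hi1] at hc ⊢
          linarith [hc]
        have e3 : ((2*m+i+(k+1)).choose (m+(k+1)) : ℚ) * ((m:ℚ)+(k:ℚ)+1) = ((2*(m:ℚ)+(i:ℚ)+(k:ℚ)+1)) * ((2*m+i+k).choose (m+k) : ℚ) := by
          have := Nat.add_one_mul_choose_eq (2*m+i+k) (m+k)
          have hc : (((2*m+i+k+1) * ((2*m+i+k).choose (m+k)) : ℕ) : ℚ) = (((2*m+i+k+1).choose (m+k+1) * (m+k+1) : ℕ) : ℚ) := by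
            exact_mod_cast congrArg (Nat.cast (R := ℚ)) this
          push_cast at hc ⊢
          have h1 : 2*m+i+(k+1) = 2*m+i+k+1 := by ring
          have h2 : m+(k+1) = m+k+1 := by ring
          rw [show ((2*m+i+(k+1)).choose (m+(k+1)) : ℚ) = ((2*m+i+k+1).choose (m+k+1) : ℚ) by rw [h1, h2]]
          linarith [hc]
        -- express the shifted binomials via divisions
        have d1 : ((j:ℚ)-(k:ℚ)+1) ≠ 0 := by
          have : (k:ℚ) ≤ j := by exact_mod_cast hkj
          nlinarith
        have d2 : ((k:ℚ)+1) ≠ 0 := by positivity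
        have d3 : ((m:ℚ)+(k:ℚ)+1) ≠ 0 := by positivity
        have hX : (m.choose ((j-k)+1) : ℚ) = (m.choose (j-k) : ℚ) * ((m:ℚ)-(j:ℚ)+(k:ℚ)) / ((j:ℚ)-(k:ℚ)+1) := by
          field_simp
          linarith [e1]
        have hY : (i.choose (k+1) : ℚ) = (i.choose k : ℚ) * ((i:ℚ)-(k:ℚ)) / ((k:ℚ)+1) := by
          field_simp
          linarith [e2]
        have hZ : ((2*m+i+(k+1)).choose (m+(k+1)) : ℚ) = ((2*(m:ℚ)+(i:ℚ)+(k:ℚ)+1)) * ((2*m+i+k).choose (m+k) : ℚ) / ((m:ℚ)+(k:ℚ)+1) := by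
          field_simp
          linarith [e3]
        rw [hX, hY, hZ]
        field_simp
        ring
      · -- k > i : choose i k = 0 and choose i (k+1) = 0
        rw [Nat.choose_eq_zero_of_lt hi1, Nat.choose_eq_zero_of_lt (by omega : i < k+1)]
        push_cast
        ring
    · -- j - k > m : all first factors vanish
      rw [Nat.choose_eq_zero_of_lt (by omega : m < (j-k)+1), Nat.choose_eq_zero_of_lt hm1]
      push_cast
      ring
  · rcases eq_or_lt_of_le (by omega : j + 1 ≤ k) with hk | hk
    · -- k = j+1
      rw [if_pos (by omega), if_neg (by omega), if_neg (by omega)]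
      have : ((j:ℚ)+1)*((m:ℚ)+j+1) - (k:ℚ)*((k:ℚ)+m) = 0 := by
        rw [← hk]; push_cast; ring
      rw [this]; ring
    · rw [if_neg (by omega), if_neg (by omega), if_neg (by omega)]
      ring

noncomputable def SQ (m i j : ℕ) : ℚ := ∑ k ∈ Finset.range (j+1), tQ m i j k

theorem SQ_rec (m i j : ℕ) :
    ((j:ℚ)+1)*((m:ℚ)+j+1) * SQ m i (j+1)
      = ((m:ℚ)+i+j+1) * ((m:ℚ)+(i:ℚ)-(j:ℚ)) * SQ m i j := by
  have key : ∀ k, ((j:ℚ)+1)*((m:ℚ)+j+1) * tQ m i (j+1) k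
      = ((m:ℚ)+i+j+1) * ((m:ℚ)+(i:ℚ)-(j:ℚ)) * tQ m i j k
        + ((k:ℚ)*((k:ℚ)+m) * tQ m i (j+1) k - ((k:ℚ)+1)*(((k:ℚ)+1)+m) * tQ m i (j+1) (k+1)) := by
    intro k
    have := tQ_cert m i j k
    push_cast
    push_cast at this
    linarith [this]
  unfold SQ
  rw [Finset.mul_sum]
  calc ∑ k ∈ Finset.range (j+1+1), ((j:ℚ)+1)*((m:ℚ)+j+1) * tQ m i (j+1) k
      = ∑ k ∈ Finset.range (j+2), (((m:ℚ)+i+j+1) * ((m:ℚ)+(i:ℚ)-(j:ℚ)) * tQ m i j k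
        + ((k:ℚ)*((k:ℚ)+m) * tQ m i (j+1) k - ((k:ℚ)+1)*(((k:ℚ)+1)+m) * tQ m i (j+1) (k+1))) := by
        apply Finset.sum_congr (by norm_num)
        intro k _
        exact key k
    _ = ((m:ℚ)+i+j+1) * ((m:ℚ)+(i:ℚ)-(j:ℚ)) * ∑ k ∈ Finset.range (j+2), tQ m i j k
        + ∑ k ∈ Finset.range (j+2), ((fun k : ℕ => (k:ℚ)*((k:ℚ)+m) * tQ m i (j+1) k) k
            - (fun k : ℕ => (k:ℚ)*((k:ℚ)+m) * tQ m i (j+1) k) (k+1)) := by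
        rw [Finset.sum_add_distrib, Finset.mul_sum]
        congr 1
        apply Finset.sum_congr rfl
        intro k _
        simp only []
        push_cast
        ring
    _ = ((m:ℚ)+i+j+1) * ((m:ℚ)+(i:ℚ)-(j:ℚ)) * ∑ k ∈ Finset.range (j+1), tQ m i j k := by
        rw [Finset.sum_range_sub' (fun k : ℕ => (k:ℚ)*((k:ℚ)+m) * tQ m i (j+1) k) (j+2)]
        have h1 : tQ m i (j+1) (j+2) = 0 := by unfold tQ; rw [if_neg (by omega)]
        have h2 : tQ m i j (j+1) = 0 := by unfold tQ; rw [if_neg (by omega)]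
        rw [Finset.sum_range_succ _ (j+1), h2, h1]
        push_cast
        ring

theorem SQ_eq (m i j : ℕ) :
    SQ m i j = ((m+i+j).choose j : ℚ) * ((2*m+i).choose (m+j) : ℚ) := by
  induction j with
  | zero =>
      unfold SQ tQ
      simp
  | succ j ih =>
      have hR : ((j:ℚ)+1)*((m:ℚ)+j+1) * (((m+i+(j+1)).choose (j+1) : ℚ) * ((2*m+i).choose (m+(j+1)) : ℚ))
          = ((m:ℚ)+i+j+1) * ((m:ℚ)+(i:ℚ)-(j:ℚ)) * (((m+i+j).choose j : ℚ) * ((2*m+i).choose (m+j) : ℚ)) := by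
        rcases le_or_gt j (m+i) with hj | hj
        · have e4 : ((m+i+(j+1)).choose (j+1) : ℚ) * ((j:ℚ)+1) = ((m:ℚ)+i+j+1) * ((m+i+j).choose j : ℚ) := by
            have := Nat.add_one_mul_choose_eq (m+i+j) j
            have hc : (((m+i+j+1) * ((m+i+j).choose j) : ℕ) : ℚ) = (((m+i+j+1).choose (j+1) * (j+1) : ℕ) : ℚ) := by
              exact_mod_cast congrArg (Nat.cast (R := ℚ)) this
            push_cast at hc ⊢
            rw [show m+i+(j+1) = m+i+j+1 by ring]
            push_cast
            linarith [hc]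
          have e5 : ((2*m+i).choose (m+(j+1)) : ℚ) * ((m:ℚ)+j+1) = ((m:ℚ)+(i:ℚ)-(j:ℚ)) * ((2*m+i).choose (m+j) : ℚ) := by
            have := Nat.choose_succ_right_eq (2*m+i) (m+j)
            have hc : (((2*m+i).choose (m+j+1) * (m+j+1) : ℕ) : ℚ) = (((2*m+i).choose (m+j) * (2*m+i - (m+j)) : ℕ) : ℚ) := by
              exact_mod_cast congrArg (Nat.cast (R := ℚ)) this
            rw [Nat.cast_mul, Nat.cast_mul, Nat.cast_sub (by omega)] at hc
            push_cast at hc ⊢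
            rw [show m+(j+1) = m+j+1 by ring]
            push_cast
            linarith [hc]
          linear_combination (((m:ℚ)+j+1) * ((2*m+i).choose (m+(j+1)) : ℚ)) * e4
            + (((m:ℚ)+i+j+1) * ((m+i+j).choose j : ℚ)) * e5
        · have z1 : (2*m+i).choose (m+(j+1)) = 0 := Nat.choose_eq_zero_of_lt (by omega)
          have z2 : (2*m+i).choose (m+j) = 0 := Nat.choose_eq_zero_of_lt (by omega)
          rw [z1, z2]
          push_cast
          ring
      have hne : ((j:ℚ)+1)*((m:ℚ)+j+1) ≠ 0 := by positivity
      have := SQ_rec m i j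
      rw [ih] at this
      apply mul_left_cancel₀ hne
      rw [this, hR]
lemma factQ_ne (a : ℕ) : ((a ! : ℕ) : ℚ) ≠ 0 :=
  Nat.cast_ne_zero.mpr (Nat.factorial_ne_zero a)

noncomputable def Lmat (m n : ℕ) : Matrix (Fin n) (Fin n) ℚ :=
  Matrix.of fun i k : Fin n =>
    if (k:ℕ) ≤ (i:ℕ) then
      (((i:ℕ)! * (2*m+(i:ℕ)+(k:ℕ))! : ℕ) : ℚ) / (((2*(k:ℕ))! * ((i:ℕ)-(k:ℕ))! * (2*m+(i:ℕ))! : ℕ) : ℚ)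
    else 0

noncomputable def Umat (m n : ℕ) : Matrix (Fin n) (Fin n) ℚ :=
  Matrix.of fun k j : Fin n =>
    if (k:ℕ) ≤ (j:ℕ) then
      (m.choose ((j:ℕ)-(k:ℕ)) : ℚ) * (((2*(k:ℕ))! * (m+(j:ℕ))! * (j:ℕ)! : ℕ) : ℚ)
        / (((k:ℕ)! * (m+(k:ℕ))! * (2*(j:ℕ))! : ℕ) : ℚ)
    else 0

lemma LU_entry (m n : ℕ) (i j : Fin n) :
    (Lmat m n * Umat m n) i j = (((m+(i:ℕ)+(j:ℕ)).choose (2*(j:ℕ)) : ℕ) : ℚ) := by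
  set I := (i:ℕ) with hI
  set J := (j:ℕ) with hJdef
  have hJ : J < n := j.isLt
  set f : ℕ → ℚ := fun k =>
    (if k ≤ I then ((I ! * (2*m+I+k)! : ℕ) : ℚ) / (((2*k)! * (I-k)! * (2*m+I)! : ℕ) : ℚ) else 0)
      * (if k ≤ J then (m.choose (J-k) : ℚ) * (((2*k)! * (m+J)! * J ! : ℕ) : ℚ) / ((k ! * (m+k)! * (2*J)! : ℕ) : ℚ) else 0)
    with hf
  have cst_eq : ∀ k ∈ Finset.range (J+1),
      f k = (((m+J)! * J ! * (m+I)! : ℕ) : ℚ) / (((2*J)! * (2*m+I)! : ℕ) : ℚ) * tQ m I J k := by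
    intro k hk'
    have hk : k ≤ J := by simpa using Nat.lt_succ_iff.mp (Finset.mem_range.mp hk')
    rw [hf]
    simp only []
    rw [if_pos hk]
    unfold tQ
    rw [if_pos hk]
    by_cases hki : k ≤ I
    · rw [if_pos hki]
      have c1 : (I.choose k : ℚ) = (I ! : ℚ) / ((k ! : ℚ) * ((I-k)! : ℚ)) := Nat.cast_choose ℚ hki
      have c2 : ((2*m+I+k).choose (m+k) : ℚ)
          = ((2*m+I+k)! : ℚ) / (((m+k)! : ℚ) * ((m+I)! : ℚ)) := by
        have h := Nat.cast_choose ℚ (show m+k ≤ 2*m+I+k by omega)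
        rwa [show 2*m+I+k - (m+k) = m+I by omega] at h
      rw [c1, c2]
      push_cast
      have n1 := factQ_ne I; have n2 := factQ_ne (2*k); have n3 := factQ_ne (I-k)
      have n4 := factQ_ne (2*m+I); have n5 := factQ_ne k; have n6 := factQ_ne (m+k)
      have n7 := factQ_ne (2*J); have n8 := factQ_ne (m+I); have n9 := factQ_ne (m+J)
      have n10 := factQ_ne J; have n11 := factQ_ne (2*m+I+k)
      push_cast at n1 n2 n3 n4 n5 n6 n7 n8 n9 n10 n11
      field_simp
    · rw [if_neg hki, Nat.choose_eq_zero_of_lt (by omega : I < k)]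
      push_cast
      ring
  have step1 : (Lmat m n * Umat m n) i j = ∑ k ∈ Finset.range n, f k := by
    show (∑ k : Fin n, Lmat m n i k * Umat m n k j) = _
    rw [← Fin.sum_univ_eq_sum_range]
    apply Finset.sum_congr rfl
    intro k _
    simp only [Lmat, Umat, Matrix.of_apply, hf]
    rfl
  rw [step1]
  have step2 : ∑ k ∈ Finset.range n, f k = ∑ k ∈ Finset.range (J+1), f k := by
    rw [Finset.sum_subset (Finset.range_subset_range.mpr (show J+1 ≤ n by omega))]
    intro k _ hk2
    have hk3 : J < k := by
      by_contra h
      exact hk2 (Finset.mem_range.mpr (by omega))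
    rw [hf]
    simp only []
    rw [if_neg (show ¬ k ≤ J by omega)]
    ring
  rw [step2, Finset.sum_congr rfl cst_eq, ← Finset.mul_sum]
  have : ∑ k ∈ Finset.range (J+1), tQ m I J k = SQ m I J := rfl
  rw [this, SQ_eq]
  rcases le_or_gt J (m+I) with hmi | hmi
  · have c3 : ((m+I+J).choose J : ℚ) = ((m+I+J)! : ℚ) / ((J ! : ℚ) * ((m+I)! : ℚ)) := by
      have h := Nat.cast_choose ℚ (show J ≤ m+I+J by omega)
      rwa [show m+I+J - J = m+I by omega] at h
    have c4 : ((2*m+I).choose (m+J) : ℚ) = ((2*m+I)! : ℚ) / (((m+J)! : ℚ) * ((m+I-J)! : ℚ)) := by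
      have h := Nat.cast_choose ℚ (show m+J ≤ 2*m+I by omega)
      rwa [show 2*m+I - (m+J) = m+I-J by omega] at h
    have c5 : (((m+I+J).choose (2*J) : ℕ) : ℚ) = ((m+I+J)! : ℚ) / (((2*J)! : ℚ) * ((m+I-J)! : ℚ)) := by
      have h := Nat.cast_choose ℚ (show 2*J ≤ m+I+J by omega)
      rwa [show m+I+J - 2*J = m+I-J by omega] at h
    rw [c3, c4, c5]
    have n1 := factQ_ne (m+J); have n2 := factQ_ne J; have n3 := factQ_ne (m+I)
    have n4 := factQ_ne (2*J); have n5 := factQ_ne (2*m+I); have n6 := factQ_ne (m+I-J)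
    push_cast at n1 n2 n3 n4 n5 n6
    push_cast
    field_simp
  · rw [Nat.choose_eq_zero_of_lt (show 2*m+I < m+J by omega),
        Nat.choose_eq_zero_of_lt (show m+I+J < 2*J by omega)]
    push_cast
    ring

lemma prodShift (c : ℕ) : ∀ j : ℕ,
    ∏ i ∈ Finset.Icc 1 j, ((c:ℚ)+(i:ℚ)) = (((c+j)! : ℕ) : ℚ) / ((c ! : ℕ) : ℚ)
  | 0 => by
      rw [show Finset.Icc 1 0 = ∅ by simp, Finset.prod_empty, Nat.add_zero,
        div_self (factQ_ne c)]
  | (j+1) => by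
      rw [Finset.prod_Icc_succ_top (by omega : 1 ≤ j+1), prodShift c j]
      have h1 : ((c+(j+1))! : ℕ) = (c+j+1) * (c+j)! := by
        rw [show c+(j+1) = (c+j)+1 by ring, Nat.factorial_succ]
      rw [h1]
      have n1 := factQ_ne c; have n2 := factQ_ne (c+j)
      push_cast at n1 n2 ⊢
      field_simp
      ring

lemma Ddiag (m a : ℕ) :
    ((a ! * (2*m+2*a)! : ℕ) : ℚ) / (((2*a)! * (2*m+a)! : ℕ) : ℚ)
      = ∏ i ∈ Finset.Icc 1 a, ((2*(m:ℚ)+(i:ℚ)+(a:ℚ)) / ((i:ℚ)+(a:ℚ))) := by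
  rw [Finset.prod_div_distrib]
  have h1 : ∏ i ∈ Finset.Icc 1 a, (2*(m:ℚ)+(i:ℚ)+(a:ℚ))
      = (((2*m+a+a)! : ℕ) : ℚ) / (((2*m+a)! : ℕ) : ℚ) := by
    rw [← prodShift (2*m+a) a]
    apply Finset.prod_congr rfl
    intro i _
    push_cast
    ring
  have h2 : ∏ i ∈ Finset.Icc 1 a, ((i:ℚ)+(a:ℚ))
      = (((a+a)! : ℕ) : ℚ) / ((a ! : ℕ) : ℚ) := by
    rw [← prodShift a a]
    apply Finset.prod_congr rfl
    intro i _
    push_cast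
    ring
  rw [h1, h2, show 2*m+a+a = 2*m+2*a by ring, show a+a = 2*a by ring]
  have n1 := factQ_ne a; have n2 := factQ_ne (2*m+2*a); have n3 := factQ_ne (2*a)
  have n4 := factQ_ne (2*m+a)
  push_cast at n1 n2 n3 n4 ⊢
  field_simp

theorem binomial_det_product (m n : ℕ) (hm : 1 ≤ m) (hn : 1 ≤ n) :
    Matrix.det (Matrix.of fun i j : Fin n =>
        if (j : ℕ) ≤ (i : ℕ) + m then (((i : ℕ) + j + m).choose ((i : ℕ) + m - j) : ℚ)
        else 0) =
      ∏ j ∈ Finset.Icc 1 (n - 1), ∏ i ∈ Finset.Icc 1 j,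
        ((2 * m + i + j : ℚ) / (i + j : ℚ)) := by
  have hM : (Matrix.of fun i j : Fin n =>
      if (j : ℕ) ≤ (i : ℕ) + m then (((i : ℕ) + j + m).choose ((i : ℕ) + m - j) : ℚ)
      else 0) = Lmat m n * Umat m n := by
    ext i j
    rw [LU_entry, Matrix.of_apply]
    by_cases h : (j:ℕ) ≤ (i:ℕ)+m
    · rw [if_pos h]
      have h1 : (i:ℕ)+m-(j:ℕ) = ((i:ℕ)+(j:ℕ)+m) - 2*(j:ℕ) := by omega
      rw [h1, Nat.choose_symm (by omega : 2*(j:ℕ) ≤ (i:ℕ)+(j:ℕ)+m),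
        show (i:ℕ)+(j:ℕ)+m = m+(i:ℕ)+(j:ℕ) by ring]
    · rw [if_neg h, Nat.choose_eq_zero_of_lt (by omega), Nat.cast_zero]
  rw [hM, Matrix.det_mul]
  have hL : (Lmat m n).det = ∏ i : Fin n, Lmat m n i i := by
    apply Matrix.det_of_lowerTriangular
    intro i j hij
    have h2 : ¬ (j ≤ i) := not_le.mpr (OrderDual.toDual_lt_toDual.mp hij)
    have h3 : ¬ ((j:ℕ) ≤ (i:ℕ)) := fun hc => h2 (Fin.le_def.mpr hc)
    simp [Lmat, h2, h3]
  have hU : (Umat m n).det = ∏ j : Fin n, Umat m n j j := by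
    apply Matrix.det_of_upperTriangular
    intro i j hij
    have h2 : ¬ (i ≤ j) := not_le.mpr hij
    have h3 : ¬ ((i:ℕ) ≤ (j:ℕ)) := fun hc => h2 (Fin.le_def.mpr hc)
    simp [Umat, h2, h3]
  have hU1 : ∏ j : Fin n, Umat m n j j = 1 := by
    apply Finset.prod_eq_one
    intro j _
    simp only [Umat, Matrix.of_apply, if_pos (le_refl ((j:ℕ))), Nat.sub_self,
      Nat.choose_zero_right, Nat.cast_one, one_mul]
    rw [div_eq_one_iff_eq]
    · push_cast; ring
    · have n1 := factQ_ne ((j:ℕ)); have n2 := factQ_ne (m+(j:ℕ)); have n3 := factQ_ne (2*(j:ℕ))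
      push_cast at n1 n2 n3 ⊢
      positivity
  have hLd : ∀ i : Fin n, Lmat m n i i
      = ∏ t ∈ Finset.Icc 1 ((i:ℕ)), ((2*(m:ℚ)+(t:ℚ)+((i:ℕ):ℚ)) / ((t:ℚ)+((i:ℕ):ℚ))) := by
    intro i
    rw [← Ddiag m ((i:ℕ))]
    simp only [Lmat, Matrix.of_apply, if_pos (le_refl ((i:ℕ))), Nat.sub_self]
    rw [show 2*m+(i:ℕ)+(i:ℕ) = 2*m+2*(i:ℕ) by ring]
    norm_num [Nat.factorial]
  rw [hL, hU, hU1, mul_one]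
  calc ∏ i : Fin n, Lmat m n i i
      = ∏ k ∈ Finset.range n, ∏ t ∈ Finset.Icc 1 k, ((2*(m:ℚ)+(t:ℚ)+(k:ℚ)) / ((t:ℚ)+(k:ℚ))) := by
        rw [← Fin.prod_univ_eq_prod_range]
        exact Finset.prod_congr rfl (fun i _ => hLd i)
    _ = ∏ k ∈ Finset.Icc 1 (n-1), ∏ t ∈ Finset.Icc 1 k, ((2*(m:ℚ)+(t:ℚ)+(k:ℚ)) / ((t:ℚ)+(k:ℚ))) := by
        have hsplit : Finset.range n = insert 0 (Finset.Icc 1 (n-1)) := by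
          ext x
          simp only [Finset.mem_range, Finset.mem_insert, Finset.mem_Icc]
          omega
        rw [hsplit, Finset.prod_insert (by simp)]
        simp
    _ = ∏ j ∈ Finset.Icc 1 (n - 1), ∏ i ∈ Finset.Icc 1 j, ((2 * m + i + j : ℚ) / (i + j : ℚ)) := by
        apply Finset.prod_congr rfl
        intro k _
        apply Finset.prod_congr rfl
        intro t _
        push_cast
        ring
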